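/- Assume (J) and (F2'), and suppose c_β ∈ ℝ for every 0 < β ≤ +∞. Let β_n → +∞ and, for each n, let A_n ∈ F be optimal for J_{β_n} at c_{β_n} (i.e. sup_{A_n} J_{β_n} = c_{β_n}). Then A_∞ := limsup_n A_n belongs to F and is optimal for J_∞ at c_∞, i.e. sup_{x ∈ A_∞} J_∞(x) = c_∞. -/
import Mathlib


open Filter Topology

/-- Kuratowski limit superior of a sequence of subsets of a metric space. -/
def SeqLimsup {X : Type*} [MetricSpace X] (A : ℕ → Set X) : Set X :=
  {x | ∃ φ : ℕ → ℕ, StrictMono φ ∧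
    ∃ y : ℕ → X, (∀ n, y n ∈ A (φ n)) ∧ Tendsto y atTop (𝓝 x)}

/-- Assume (J) and (F2'), and suppose the minimax levels are real. If
`β_n → +∞` and each `A_n ∈ F` is optimal for `J_{β_n}` at `c_{β_n}`, then
`A_∞ := limsup_n A_n` belongs to `F` and is optimal for `J_∞` at `c_∞`. -/
theorem optimal_sets_converge {X : Type*} [MetricSpace X]
    (F : Set (Set X)) (J : ℝ → X → EReal)
    -- each J_β, β > 0, is lower semicontinuous
    (hlsc : ∀ β : ℝ, 0 < β → LowerSemicontinuous (J β))
    -- assumption (J): monotonicity in β on (0, +∞)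
    (hmono : ∀ β₁ β₂ : ℝ, 0 < β₁ → β₁ ≤ β₂ → ∀ x, J β₁ x ≤ J β₂ x)
    -- the limit functional J_∞
    (Jinf : X → EReal) (hJinf : ∀ x, Jinf x = ⨆ β : ℝ, ⨆ _ : 0 < β, J β x)
    -- the minimax levels c_β, 0 < β < +∞
    (cβ : ℝ → EReal) (hcβ : ∀ β : ℝ, cβ β = ⨅ A ∈ F, ⨆ x ∈ A, J β x)
    -- the minimax level c_∞ is real
    (cinf : ℝ) (hcinf : (⨅ A ∈ F, ⨆ x ∈ A, Jinf x) = (cinf : EReal))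
    -- the minimax levels c_β are real
    (hcreal : ∀ β : ℝ, 0 < β → ∃ r : ℝ, cβ β = (r : EReal))
    -- assumption (F2')
    (hF2' : ∀ A : ℕ → Set X, (∀ n, A n ∈ F) →
      (∃ β : ℝ, 0 < β ∧ ∀ n, ∀ x ∈ A n, J β x ≤ (cinf : EReal) + 1) →
      SeqLimsup A ∈ F)
    -- a sequence β_n → +∞
    (b : ℕ → ℝ) (hbpos : ∀ n, 0 < b n) (hb : Tendsto b atTop atTop)
    -- A_n ∈ F optimal for J_{β_n} at c_{β_n}
    (A : ℕ → Set X) (hA : ∀ n, A n ∈ F)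
    (hopt : ∀ n, (⨆ x ∈ A n, J (b n) x) = cβ (b n)) :
    SeqLimsup A ∈ F ∧ (⨆ x ∈ SeqLimsup A, Jinf x) = (cinf : EReal) := by
  -- J β ≤ Jinf pointwise
  have hJleJinf : ∀ β : ℝ, 0 < β → ∀ x, J β x ≤ Jinf x := by
    intro β hβ x
    rw [hJinf]
    exact le_iSup₂ (f := fun β (_ : 0 < β) => J β x) β hβ
  -- c_β ≤ c_∞
  have hcle : ∀ β : ℝ, 0 < β → cβ β ≤ (cinf : EReal) := by
    intro β hβ
    rw [hcβ, ← hcinf]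
    exact iInf_mono fun B => iInf_mono fun _ =>
      iSup_mono fun x => iSup_mono fun _ => hJleJinf β hβ x
  -- key estimate on the optimal sets
  have key : ∀ n, ∀ x ∈ A n, J (b n) x ≤ (cinf : EReal) := by
    intro n x hx
    calc J (b n) x ≤ ⨆ x ∈ A n, J (b n) x :=
          le_iSup₂ (f := fun x (_ : x ∈ A n) => J (b n) x) x hx
      _ = cβ (b n) := hopt n
      _ ≤ (cinf : EReal) := hcle (b n) (hbpos n)
  -- a positive lower bound for b
  obtain ⟨N, hN⟩ := (hb.eventually_ge_atTop 1).exists_forall_of_atTop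
  set β₀ : ℝ := min 1 ((Finset.range (N + 1)).inf' (by simp) b) with hβ₀def
  have hβ₀pos : 0 < β₀ :=
    lt_min one_pos ((Finset.lt_inf'_iff _).mpr fun i _ => hbpos i)
  have hβ₀le : ∀ n, β₀ ≤ b n := by
    intro n
    rcases le_or_gt n N with h | h
    · exact le_trans (min_le_right _ _)
        (Finset.inf'_le _ (Finset.mem_range.mpr (Nat.lt_succ_of_le h)))
    · exact le_trans (min_le_left _ _) (hN n h.le)
  have hc1 : (cinf : EReal) ≤ (cinf : EReal) + 1 := by
    rw [show ((1 : EReal)) = ((1 : ℝ) : EReal) from rfl, ← EReal.coe_add]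
    exact_mod_cast (by linarith : cinf ≤ cinf + 1)
  have hmem : SeqLimsup A ∈ F := by
    refine hF2' A hA ⟨β₀, hβ₀pos, fun n x hx => ?_⟩
    exact le_trans (le_trans (hmono β₀ (b n) hβ₀pos (hβ₀le n) x) (key n x hx)) hc1
  refine ⟨hmem, le_antisymm ?_ ?_⟩
  · refine iSup₂_le fun x hx => ?_
    rw [hJinf]
    refine iSup₂_le fun β hβ => ?_
    obtain ⟨φ, hφ, y, hy, hty⟩ := hx
    by_contra h
    have hlt : (cinf : EReal) < J β x := lt_of_not_ge h
    have h2 : ∀ᶠ k in atTop, (cinf : EReal) < J β (y k) :=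
      hty.eventually (hlsc β hβ x (cinf : EReal) hlt)
    have h3 : ∀ᶠ k in atTop, β ≤ b (φ k) :=
      (hb.comp hφ.tendsto_atTop).eventually_ge_atTop β
    obtain ⟨k, hk1, hk2⟩ := (h2.and h3).exists
    exact absurd (le_trans (hmono β (b (φ k)) hβ hk2 (y k)) (key (φ k) (y k) (hy k)))
      (not_le.mpr hk1)
  · rw [← hcinf]
    exact iInf₂_le _ hmem
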